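/- Let F(r) = 2(1+k)r/(1-r) + 2k·ln(1-r) − 1 for k ∈ (0,1]. Then F(0) = −1 < 0, F(1/3) = k·ln(4e/9) > 0, and F'(r) = (2+2kr)/(1-r)^2 > 0 on [0,1/3]; consequently the equation 2(1+k)r/(1-r) + 2k·ln(1-r) = 1 has a unique root r_c(k) in the interval (0,1/3). -/

import Mathlib

theorem unique_root_rc (k : ℝ) (hk0 : 0 < k) (hk1 : k ≤ 1) :
    (2*(1+k)*(0:ℝ)/(1-0) + 2*k*Real.log (1-0) - 1 = -1) ∧
    (2*(1+k)*(1/3:ℝ)/(1-1/3) + 2*k*Real.log (1-1/3) - 1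
        = k * Real.log (4 * Real.exp 1 / 9)) ∧
    (0 < k * Real.log (4 * Real.exp 1 / 9)) ∧
    (∀ r ∈ Set.Icc (0:ℝ) (1/3),
        HasDerivAt (fun r : ℝ => 2*(1+k)*r/(1-r) + 2*k*Real.log (1-r) - 1)
          ((2 + 2*k*r)/(1-r)^2) r ∧ 0 < (2 + 2*k*r)/(1-r)^2) ∧
    (∃! r : ℝ, r ∈ Set.Ioo (0:ℝ) (1/3) ∧
        2*(1+k)*r/(1-r) + 2*k*Real.log (1-r) = 1) := by
  have hlogval : Real.log (4 * Real.exp 1 / 9) = 2 * Real.log 2 + 1 - 2 * Real.log 3 := by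
    rw [Real.log_div (by positivity) (by norm_num), Real.log_mul (by norm_num) (Real.exp_pos 1).ne',
      Real.log_exp, show (4:ℝ) = 2^2 by norm_num, show (9:ℝ) = 3^2 by norm_num,
      Real.log_pow, Real.log_pow]
    push_cast; ring
  have h23 : Real.log (2/3 : ℝ) = Real.log 2 - Real.log 3 := Real.log_div (by norm_num) (by norm_num)
  have hF13 : 2*(1+k)*(1/3:ℝ)/(1-1/3) + 2*k*Real.log (1-1/3) - 1
      = k * Real.log (4 * Real.exp 1 / 9) := by
    rw [show (1:ℝ) - 1/3 = 2/3 by norm_num, h23, hlogval]; ring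
  have hpos : 0 < k * Real.log (4 * Real.exp 1 / 9) := by
    apply mul_pos hk0
    apply Real.log_pos
    have := Real.exp_one_gt_d9
    rw [lt_div_iff₀ (by norm_num)]
    nlinarith
  have hderiv : ∀ r ∈ Set.Icc (0:ℝ) (1/3),
      HasDerivAt (fun r : ℝ => 2*(1+k)*r/(1-r) + 2*k*Real.log (1-r) - 1)
        ((2 + 2*k*r)/(1-r)^2) r := by
    intro r hr
    have hr1 : (1:ℝ) - r > 0 := by
      have := hr.2; linarith
    have hne : (1:ℝ) - r ≠ 0 := hr1.ne'
    have h1 : HasDerivAt (fun r : ℝ => 2*(1+k)*r) (2*(1+k)) r := by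
      simpa using (hasDerivAt_id r).const_mul (2*(1+k))
    have h2 : HasDerivAt (fun r : ℝ => 1 - r) (-1) r := by
      simpa using (hasDerivAt_id r).const_sub 1
    have hdiv := h1.div h2 hne
    have hlog : HasDerivAt (fun r : ℝ => 2*k*Real.log (1-r)) (2*k * (-1/(1-r))) r := by
      simpa [div_eq_mul_inv, mul_assoc] using ((h2.log hne)).const_mul (2*k)
    have := (hdiv.add hlog).sub_const 1
    refine this.congr_deriv ?_
    field_simp
    ring
  have hdpos : ∀ r ∈ Set.Icc (0:ℝ) (1/3), 0 < (2 + 2*k*r)/(1-r)^2 := by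
    intro r hr
    have h0 := hr.1
    have h1 : (1:ℝ) - r > 0 := by have := hr.2; linarith
    have : 0 < 2 + 2*k*r := by nlinarith
    positivity
  refine ⟨by norm_num, hF13, hpos, fun r hr => ⟨hderiv r hr, hdpos r hr⟩, ?_⟩
  set f : ℝ → ℝ := fun r => 2*(1+k)*r/(1-r) + 2*k*Real.log (1-r) - 1 with hf
  have hcont : ContinuousOn f (Set.Icc 0 (1/3)) :=
    fun r hr => (hderiv r hr).continuousAt.continuousWithinAt
  have hmono : StrictMonoOn f (Set.Icc 0 (1/3)) := by
    apply strictMonoOn_of_deriv_pos (convex_Icc _ _) hcont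
    intro r hr
    rw [interior_Icc] at hr
    have hr' : r ∈ Set.Icc (0:ℝ) (1/3) := Set.mem_Icc_of_Ioo hr
    rw [(hderiv r hr').deriv]
    exact hdpos r hr'
  have hf0 : f 0 = -1 := by simp [hf]
  have hf13 : f (1/3) = k * Real.log (4 * Real.exp 1 / 9) := hF13
  have hivt := intermediate_value_Ioo (by norm_num : (0:ℝ) ≤ 1/3) hcont
  have h0mem : (0:ℝ) ∈ Set.Ioo (f 0) (f (1/3)) := by
    rw [hf0, hf13]; exact ⟨by norm_num, hpos⟩
  obtain ⟨r, hrmem, hfr⟩ := hivt h0mem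
  refine ⟨r, ⟨hrmem, by have : f r = 0 := hfr; simp only [hf] at this; linarith⟩, ?_⟩
  rintro s ⟨hsmem, hseq⟩
  have hfs : f s = 0 := by simp only [hf]; linarith
  have hfr0 : f r = 0 := hfr
  have hs' : s ∈ Set.Icc (0:ℝ) (1/3) := Set.mem_Icc_of_Ioo hsmem
  have hr' : r ∈ Set.Icc (0:ℝ) (1/3) := Set.mem_Icc_of_Ioo hrmem
  exact hmono.injOn hs' hr' (by rw [hfs, hfr0])
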